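/- Let F be an invertible n×n complex matrix and ξ > 0. Define the 2n×2n block matrix H = [[F, ξ⁻²·I], [−I, −F*]]. Then det(H) · det(−ξ²·I_n) = det(F⁻¹* F⁻¹ − ξ² I) · det([[F, 0],[−I, −F*]]). Consequently, det(H) = 0 if and only if F⁻¹ has a singular value equal to ξ. -/

import Mathlib

open Matrix

/-- `ξ` is a singular value of `A` iff `ξ²` is an eigenvalue of `Aᴴ A`. -/
def IsSingularValue {n : ℕ} (A : Matrix (Fin n) (Fin n) ℂ) (ξ : ℝ) : Prop :=
  ∃ v : Fin n → ℂ, v ≠ 0 ∧ (Aᴴ * A) *ᵥ v = ((ξ : ℂ) ^ 2) • v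

/-- The key determinant identity (eq. (vier)) for
`H = [[F, ξ⁻² I], [−I, −Fᴴ]]`, and the resulting singular value characterization. -/
theorem stmt_3 {n : ℕ} (F : Matrix (Fin n) (Fin n) ℂ) (hF : IsUnit F.det)
    (ξ : ℝ) (hξ : 0 < ξ)
    (H : Matrix (Fin n ⊕ Fin n) (Fin n ⊕ Fin n) ℂ)
    (hH : H = Matrix.fromBlocks F (((ξ : ℂ) ^ 2)⁻¹ • (1 : Matrix (Fin n) (Fin n) ℂ))
      (-(1 : Matrix (Fin n) (Fin n) ℂ)) (-(Fᴴ))) :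
    H.det * ((-((ξ : ℂ) ^ 2)) • (1 : Matrix (Fin n) (Fin n) ℂ)).det =
        ((F⁻¹)ᴴ * F⁻¹ - ((ξ : ℂ) ^ 2) • (1 : Matrix (Fin n) (Fin n) ℂ)).det *
          (Matrix.fromBlocks F (0 : Matrix (Fin n) (Fin n) ℂ)
            (-(1 : Matrix (Fin n) (Fin n) ℂ)) (-(Fᴴ))).det ∧
      (H.det = 0 ↔ IsSingularValue F⁻¹ ξ) := by
  set c : ℂ := (ξ : ℂ) ^ 2 with hc
  have hcne : c ≠ 0 := by
    simp [hc]
    exact_mod_cast hξ.ne'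
  have hdF : F.det ≠ 0 := hF.ne_zero
  haveI : Invertible F := F.invertibleOfIsUnitDet hF
  -- det of H via Schur complement
  have hdetH : H.det = F.det * (c⁻¹ • F⁻¹ - Fᴴ).det := by
    rw [hH, Matrix.det_fromBlocks₁₁, Matrix.invOf_eq_nonsing_inv]
    congr 1
    congr 1
    rw [Matrix.neg_mul, Matrix.neg_mul, sub_neg_eq_add]
    rw [Matrix.mul_smul, Matrix.mul_one, Matrix.one_mul]
    abel
  have hdet2 : (Matrix.fromBlocks F (0 : Matrix (Fin n) (Fin n) ℂ)
      (-(1 : Matrix (Fin n) (Fin n) ℂ)) (-(Fᴴ))).det = F.det * (-(Fᴴ)).det :=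
    Matrix.det_fromBlocks_zero₁₂ _ _ _
  -- key matrix identity
  have hkey : (-c) • (c⁻¹ • F⁻¹ - Fᴴ) = (-(Fᴴ)) * ((F⁻¹)ᴴ * F⁻¹ - c • 1) := by
    have h1 : Fᴴ * (F⁻¹)ᴴ = 1 := by
      rw [← Matrix.conjTranspose_mul, Matrix.nonsing_inv_mul F hF,
        Matrix.conjTranspose_one]
    rw [Matrix.neg_mul, Matrix.mul_sub, ← Matrix.mul_assoc, h1, Matrix.one_mul,
      Matrix.mul_smul, Matrix.mul_one, smul_sub, smul_smul]
    field_simp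
    module
  -- main identity
  have hmain : H.det * ((-c) • (1 : Matrix (Fin n) (Fin n) ℂ)).det =
      ((F⁻¹)ᴴ * F⁻¹ - c • (1 : Matrix (Fin n) (Fin n) ℂ)).det *
        (Matrix.fromBlocks F (0 : Matrix (Fin n) (Fin n) ℂ)
          (-(1 : Matrix (Fin n) (Fin n) ℂ)) (-(Fᴴ))).det := by
    rw [hdetH, hdet2, Matrix.det_smul, Matrix.det_one, mul_one]
    have := congrArg Matrix.det hkey
    rw [Matrix.det_smul, Matrix.det_mul] at this
    calc F.det * (c⁻¹ • F⁻¹ - Fᴴ).det * ((-c) ^ Fintype.card (Fin n))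
        = F.det * ((-c) ^ Fintype.card (Fin n) * (c⁻¹ • F⁻¹ - Fᴴ).det) := by ring
      _ = F.det * ((-(Fᴴ)).det * ((F⁻¹)ᴴ * F⁻¹ - c • 1).det) := by rw [this]
      _ = ((F⁻¹)ᴴ * F⁻¹ - c • 1).det * (F.det * (-(Fᴴ)).det) := by ring
  refine ⟨hmain, ?_⟩
  -- second part
  have hFHne : (-(Fᴴ)).det ≠ 0 := by
    rw [Matrix.det_neg, Matrix.det_conjTranspose]
    simp [hdF]
  have hcpne : ((-c) ^ Fintype.card (Fin n)) ≠ 0 := pow_ne_zero _ (neg_ne_zero.mpr hcne)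
  have hiff : H.det = 0 ↔ ((F⁻¹)ᴴ * F⁻¹ - c • (1 : Matrix (Fin n) (Fin n) ℂ)).det = 0 := by
    constructor
    · intro h
      have := hmain
      rw [h, zero_mul, hdet2] at this
      rcases mul_eq_zero.mp this.symm with h' | h'
      · exact h'
      · exact absurd h' (mul_ne_zero hdF hFHne)
    · intro h
      have := hmain
      rw [h, zero_mul] at this
      rw [Matrix.det_smul, Matrix.det_one, mul_one] at this
      rcases mul_eq_zero.mp this with h' | h'
      · exact h'
      · exact absurd h' hcpne
  rw [hiff, IsSingularValue, ← Matrix.exists_mulVec_eq_zero_iff]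
  constructor
  · rintro ⟨v, hv, hmul⟩
    refine ⟨v, hv, ?_⟩
    rw [Matrix.sub_mulVec, Matrix.smul_mulVec, Matrix.one_mulVec,
      sub_eq_zero] at hmul
    exact hmul
  · rintro ⟨v, hv, hmul⟩
    refine ⟨v, hv, ?_⟩
    rw [Matrix.sub_mulVec, Matrix.smul_mulVec, Matrix.one_mulVec, sub_eq_zero]
    exact hmul
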